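/- Let a > 0, w > 0, V be reals and define φ : R → R (up to an additive constant) by φ'(θ) = a sech^2(wθ). Then the averaged Lagrangian L̄ = ∫_{-∞}^{∞} [ −(V/2) (φ')^2 + (φ')^3 − (1/2) (φ'')^2 + ε ( (c1/12) (φ')^4 + (c3/2) φ' (φ'')^2 + (c3/2) (φ')^2 φ''' + (c4/2) (φ''')^2 ) ] dθ equals (16/15) a^3 / w − (8/15) w a^2 − (2/3) V a^2 / w + ε ( (8/105) (a^4 / w) c1 − (32/105) a^3 w c3 + (32/21) w^3 a^2 c4 ). -/

import Mathlib

open MeasureTheory Real Filter Set Topology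

private lemma cosh_ne (x : ℝ) : Real.cosh x ≠ 0 := (Real.cosh_pos x).ne'



lemma tanh_aux_eq (x : ℝ) :
    Real.sinh x / Real.cosh x = (1 - Real.exp (-(2*x))) / (1 + Real.exp (-(2*x))) := by
  have h2 : (0:ℝ) < 1 + Real.exp (-(2*x)) := by positivity
  rw [Real.sinh_eq, Real.cosh_eq, div_eq_div_iff (by positivity) h2.ne']
  have e2 : Real.exp x * Real.exp (-x) = 1 := by rw [← Real.exp_add]; simp
  have e1 : Real.exp (-(2*x)) = Real.exp (-x) * Real.exp (-x) := by
    rw [← Real.exp_add]; ring_nf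
  nlinarith [Real.exp_pos x, Real.exp_pos (-x)]

lemma tanh_tendsto_atTop : Tendsto (fun x => Real.sinh x / Real.cosh x) atTop (nhds 1) := by
  have h2x : Tendsto (fun x : ℝ => Real.exp (2*x)) atTop atTop :=
    Real.tendsto_exp_atTop.comp (Tendsto.const_mul_atTop two_pos tendsto_id)
  have h0 : Tendsto (fun x : ℝ => Real.exp (-(2*x))) atTop (nhds 0) := by
    simpa [Real.exp_neg, Pi.inv_def] using h2x.inv_tendsto_atTop
  have h1 : Tendsto (fun x : ℝ => (1 - Real.exp (-(2*x))) / (1 + Real.exp (-(2*x))))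
      atTop (nhds ((1 - 0) / (1 + 0))) :=
    ((tendsto_const_nhds (x := (1:ℝ))).sub h0).div ((tendsto_const_nhds (x := (1:ℝ))).add h0)
      (by norm_num)
  simp only [tanh_aux_eq]
  simpa using h1

lemma tanh_tendsto_atBot : Tendsto (fun x => Real.sinh x / Real.cosh x) atBot (nhds (-1)) := by
  have h := tanh_tendsto_atTop.comp tendsto_neg_atBot_atTop
  have h' : Tendsto (fun x : ℝ => -(Real.sinh x / Real.cosh x)) atBot (nhds 1) := by
    simpa [Function.comp_def, Real.sinh_neg, Real.cosh_neg, neg_div] using h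
  simpa using h'.neg



lemma sech_sq_cont (w : ℝ) : Continuous fun x : ℝ => (1 / Real.cosh (w*x))^2 :=
  ((continuous_const.div (Real.continuous_cosh.comp (continuous_const.mul continuous_id))
    (fun x => cosh_ne _)).pow 2)

lemma sech_sq_integrable_one : Integrable (fun x : ℝ => (1 / Real.cosh x)^2) := by
  have hIoi : IntegrableOn (fun x : ℝ => (1 / Real.cosh x)^2) (Ioi 0) := by
    apply Integrable.mono' ((exp_neg_integrableOn_Ioi 0 two_pos).const_mul 4)
    · exact ((continuous_const.div Real.continuous_cosh (fun x => cosh_ne x)).pow 2).aestronglyMeasurable.restrict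
    · filter_upwards [ae_restrict_mem measurableSet_Ioi] with x hx
      have hx0 : (0:ℝ) ≤ x := le_of_lt hx
      have hch : Real.exp x / 2 ≤ Real.cosh x := by
        rw [Real.cosh_eq]; nlinarith [Real.exp_pos (-x)]
      have hpos : (0:ℝ) < Real.exp x / 2 := by positivity
      have h1 : 1 / Real.cosh x ≤ 2 * Real.exp (-x) := by
        rw [div_le_iff₀ (Real.cosh_pos x)]
        have he : Real.exp (-x) * Real.exp x = 1 := by rw [← Real.exp_add]; simp
        nlinarith [Real.exp_pos (-x)]
      have h0 : (0:ℝ) < 1 / Real.cosh x := by positivity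
      rw [Real.norm_eq_abs, abs_of_nonneg (by positivity)]
      have := mul_self_le_mul_self h0.le h1
      calc (1 / Real.cosh x)^2 ≤ (2 * Real.exp (-x))^2 := by nlinarith
        _ = 4 * Real.exp (-2*x) := by
            have : Real.exp (-x) * Real.exp (-x) = Real.exp (-2*x) := by
              rw [← Real.exp_add]; ring_nf
            nlinarith
  have hIic : IntegrableOn (fun x : ℝ => (1 / Real.cosh x)^2) (Iic 0) := by
    rw [← Measure.map_neg_eq_self (volume : Measure ℝ)]
    have m : MeasurableEmbedding fun x : ℝ => -x := (Homeomorph.neg ℝ).measurableEmbedding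
    rw [m.integrableOn_map_iff]
    simp only [Function.comp_def, Real.cosh_neg, neg_preimage, neg_Iic, neg_zero]
    exact (integrableOn_Ici_iff_integrableOn_Ioi).mpr hIoi
  have : IntegrableOn (fun x : ℝ => (1 / Real.cosh x)^2) (Iic 0 ∪ Ioi 0) := hIic.union hIoi
  rwa [Iic_union_Ioi, integrableOn_univ] at this

lemma sech_sq_integrable {w : ℝ} (hw : w ≠ 0) :
    Integrable (fun x : ℝ => (1 / Real.cosh (w*x))^2) :=
  sech_sq_integrable_one.comp_mul_left' hw




lemma integral_sech_poly (w A2 A3 A4 : ℝ) (hw : 0 < w) :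
    (∫ θ : ℝ, (A2 * ((1 / Real.cosh (w * θ)) ^ 2) ^ 2
        + A3 * ((1 / Real.cosh (w * θ)) ^ 2) ^ 3
        + A4 * ((1 / Real.cosh (w * θ)) ^ 2) ^ 4))
      = (4/3 * A2 + 16/15 * A3 + 32/35 * A4) / w := by
  have hwθ : ∀ θ : ℝ, HasDerivAt (fun x : ℝ => w * x) w θ := fun θ => by
    simpa using (hasDerivAt_id θ).const_mul w
  have htd : ∀ θ : ℝ, HasDerivAt (fun θ : ℝ => Real.sinh (w*θ) / Real.cosh (w*θ))
      (w * (1 / Real.cosh (w*θ))^2) θ := by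
    intro θ
    have hs : HasDerivAt (fun θ : ℝ => Real.sinh (w*θ)) (Real.cosh (w*θ) * w) θ :=
      (Real.hasDerivAt_sinh _).comp θ (hwθ θ)
    have hc : HasDerivAt (fun θ : ℝ => Real.cosh (w*θ)) (Real.sinh (w*θ) * w) θ :=
      (Real.hasDerivAt_cosh _).comp θ (hwθ θ)
    have h := hs.div hc (cosh_ne _)
    refine h.congr_deriv (Eq.symm ?_)
    have hs2 : Real.sinh (w*θ)^2 = Real.cosh (w*θ)^2 - 1 := Real.sinh_sq _
    field_simp
    linear_combination hs2
  have hderiv : ∀ θ : ℝ, HasDerivAt (fun θ : ℝ =>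
      ((A2 + A3 + A4) * (Real.sinh (w*θ) / Real.cosh (w*θ))
        + (-(A2 + 2*A3 + 3*A4)/3) * (Real.sinh (w*θ) / Real.cosh (w*θ))^3
        + (((A3 + 3*A4)/5) * (Real.sinh (w*θ) / Real.cosh (w*θ))^5
          + (-A4/7) * (Real.sinh (w*θ) / Real.cosh (w*θ))^7)) / w)
      (A2 * ((1 / Real.cosh (w * θ)) ^ 2) ^ 2
        + A3 * ((1 / Real.cosh (w * θ)) ^ 2) ^ 3
        + A4 * ((1 / Real.cosh (w * θ)) ^ 2) ^ 4) θ := by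
    intro θ
    have h := ((((htd θ).const_mul (A2 + A3 + A4)).add
        (((htd θ).pow 3).const_mul (-(A2 + 2*A3 + 3*A4)/3))).add
      ((((htd θ).pow 5).const_mul ((A3 + 3*A4)/5)).add
        (((htd θ).pow 7).const_mul (-A4/7)))).div_const w
    refine h.congr_deriv (Eq.symm ?_)
    have hs2 : Real.sinh (w*θ)^2 = Real.cosh (w*θ)^2 - 1 := Real.sinh_sq _
    have hs4 : Real.sinh (w*θ)^4 = (Real.cosh (w*θ)^2 - 1)^2 := by
      rw [show Real.sinh (w*θ)^4 = (Real.sinh (w*θ)^2)^2 by ring, hs2]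
    have hs6 : Real.sinh (w*θ)^6 = (Real.cosh (w*θ)^2 - 1)^3 := by
      rw [show Real.sinh (w*θ)^6 = (Real.sinh (w*θ)^2)^3 by ring, hs2]
    simp only [div_pow]
    push_cast
    rw [hs2, hs4, hs6]
    field_simp
    ring
  have hint : Integrable (fun θ : ℝ => A2 * ((1 / Real.cosh (w * θ)) ^ 2) ^ 2
        + A3 * ((1 / Real.cosh (w * θ)) ^ 2) ^ 3
        + A4 * ((1 / Real.cosh (w * θ)) ^ 2) ^ 4) := by
    apply Integrable.mono' ((sech_sq_integrable hw.ne').const_mul (|A2| + |A3| + |A4|))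
    · exact (((continuous_const.mul ((sech_sq_cont w).pow 2)).add
        (continuous_const.mul ((sech_sq_cont w).pow 3))).add
          (continuous_const.mul ((sech_sq_cont w).pow 4))).aestronglyMeasurable
    · refine ae_of_all _ fun θ => ?_
      set s : ℝ := (1 / Real.cosh (w*θ))^2 with hsdef
      have hs0 : 0 < s := by positivity
      have hs1 : s ≤ 1 := by
        rw [hsdef]
        have h1 : 1 ≤ Real.cosh (w*θ) := Real.one_le_cosh _
        have h2 : 1 / Real.cosh (w*θ) ≤ 1 := by
          rw [div_le_one (Real.cosh_pos _)]; exact h1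
        nlinarith [le_of_lt (by positivity : (0:ℝ) < 1 / Real.cosh (w*θ))]
      have h2 : s^2 ≤ s := by nlinarith
      have h3 : s^3 ≤ s := by nlinarith
      have h4 : s^4 ≤ s := by nlinarith
      rw [Real.norm_eq_abs]
      calc |A2 * s^2 + A3 * s^3 + A4 * s^4|
          ≤ |A2 * s^2| + |A3 * s^3| + |A4 * s^4| := abs_add_three _ _ _
        _ = |A2| * s^2 + |A3| * s^3 + |A4| * s^4 := by
            rw [abs_mul, abs_mul, abs_mul, abs_of_nonneg (by positivity : (0:ℝ) ≤ s^2),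
              abs_of_nonneg (by positivity : (0:ℝ) ≤ s^3),
              abs_of_nonneg (by positivity : (0:ℝ) ≤ s^4)]
        _ ≤ |A2| * s + |A3| * s + |A4| * s :=
            add_le_add (add_le_add (mul_le_mul_of_nonneg_left h2 (abs_nonneg A2))
              (mul_le_mul_of_nonneg_left h3 (abs_nonneg A3)))
              (mul_le_mul_of_nonneg_left h4 (abs_nonneg A4))
        _ = (|A2| + |A3| + |A4|) * s := by ring
  have hT : Tendsto (fun θ : ℝ => Real.sinh (w*θ) / Real.cosh (w*θ)) atTop (nhds 1) := by
    have := tanh_tendsto_atTop.comp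
      (Tendsto.const_mul_atTop hw tendsto_id : Tendsto (fun x : ℝ => w * x) atTop atTop)
    simpa [Function.comp_def] using this
  have hB : Tendsto (fun θ : ℝ => Real.sinh (w*θ) / Real.cosh (w*θ)) atBot (nhds (-1)) := by
    have hmul : Tendsto (fun x : ℝ => w * x) atBot atBot :=
      Tendsto.const_mul_atBot hw tendsto_id
    have := tanh_tendsto_atBot.comp hmul
    simpa [Function.comp_def] using this
  have htop := ((((hT.const_mul (A2 + A3 + A4)).add
        ((hT.pow 3).const_mul (-(A2 + 2*A3 + 3*A4)/3))).add
      (((hT.pow 5).const_mul ((A3 + 3*A4)/5)).add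
        ((hT.pow 7).const_mul (-A4/7)))).div_const w)
  have hbot := ((((hB.const_mul (A2 + A3 + A4)).add
        ((hB.pow 3).const_mul (-(A2 + 2*A3 + 3*A4)/3))).add
      (((hB.pow 5).const_mul ((A3 + 3*A4)/5)).add
        ((hB.pow 7).const_mul (-A4/7)))).div_const w)
  have hval := integral_of_hasDerivAt_of_tendsto hderiv hint hbot htop
  rw [hval]
  field_simp
  ring




/-- The averaged Lagrangian of the sech² ansatz `φ'(θ) = a sech²(wθ)`. -/
theorem averaged_lagrangian_value (a w V ε c1 c3 c4 : ℝ) (ha : 0 < a) (hw : 0 < w)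
    (u : ℝ → ℝ) (hu : ∀ θ, u θ = a * (1 / Real.cosh (w * θ)) ^ 2) :
    (∫ θ : ℝ,
        (-(V / 2) * u θ ^ 2 + u θ ^ 3 - 1 / 2 * (deriv u θ) ^ 2
          + ε * (c1 / 12 * u θ ^ 4 + c3 / 2 * u θ * (deriv u θ) ^ 2
              + c3 / 2 * u θ ^ 2 * iteratedDeriv 2 u θ
              + c4 / 2 * (iteratedDeriv 2 u θ) ^ 2)))
      = 16 / 15 * a ^ 3 / w - 8 / 15 * w * a ^ 2 - 2 / 3 * V * a ^ 2 / w
          + ε * (8 / 105 * (a ^ 4 / w) * c1 - 32 / 105 * a ^ 3 * w * c3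
              + 32 / 21 * w ^ 3 * a ^ 2 * c4) := by
  have hufun : u = fun θ => a * (1 / Real.cosh (w * θ)) ^ 2 := funext hu
  subst hufun
  have hwθ : ∀ θ : ℝ, HasDerivAt (fun x : ℝ => w * x) w θ := fun θ => by
    simpa using (hasDerivAt_id θ).const_mul w
  have hd1 : ∀ θ : ℝ, HasDerivAt (fun θ : ℝ => a * (1 / Real.cosh (w * θ)) ^ 2)
      (-(2*a*w) * (Real.sinh (w*θ) / Real.cosh (w*θ)^3)) θ := by
    intro θ
    have hc : HasDerivAt (fun θ : ℝ => Real.cosh (w*θ)) (Real.sinh (w*θ) * w) θ :=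
      (Real.hasDerivAt_cosh _).comp θ (hwθ θ)
    have h := ((hc.inv (cosh_ne _)).pow 2).const_mul a
    have heq : (fun θ : ℝ => a * (1 / Real.cosh (w * θ)) ^ 2)
        = fun θ : ℝ => a * ((Real.cosh (w * θ))⁻¹) ^ 2 := by
      funext x; rw [one_div]
    rw [heq]
    refine h.congr_deriv (Eq.symm ?_)
    simp only [Pi.inv_apply, Pi.pow_apply]
    push_cast
    field_simp
  have hD : deriv (fun θ : ℝ => a * (1 / Real.cosh (w * θ)) ^ 2)
      = fun θ : ℝ => -(2*a*w) * (Real.sinh (w*θ) / Real.cosh (w*θ)^3) :=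
    funext fun θ => (hd1 θ).deriv
  have hd2 : ∀ θ : ℝ, HasDerivAt (fun θ : ℝ => -(2*a*w) * (Real.sinh (w*θ) / Real.cosh (w*θ)^3))
      (a*w^2*(4*(1/Real.cosh (w*θ))^2 - 6*((1/Real.cosh (w*θ))^2)^2)) θ := by
    intro θ
    have hs : HasDerivAt (fun θ : ℝ => Real.sinh (w*θ)) (Real.cosh (w*θ) * w) θ :=
      (Real.hasDerivAt_sinh _).comp θ (hwθ θ)
    have hc : HasDerivAt (fun θ : ℝ => Real.cosh (w*θ)) (Real.sinh (w*θ) * w) θ :=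
      (Real.hasDerivAt_cosh _).comp θ (hwθ θ)
    have h := ((hs.div (hc.pow 3) (pow_ne_zero 3 (cosh_ne _)))).const_mul (-(2*a*w))
    refine h.congr_deriv (Eq.symm ?_)
    have hs2 : Real.sinh (w*θ)^2 = Real.cosh (w*θ)^2 - 1 := Real.sinh_sq _
    simp only [Pi.inv_apply, Pi.pow_apply]
    push_cast
    rw [show Real.sinh (w*θ) * (3 * Real.cosh (w*θ)^2 * (Real.sinh (w*θ) * w))
        = 3*w*Real.cosh (w*θ)^2*(Real.cosh (w*θ)^2 - 1) from by rw [← hs2]; ring]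
    field_simp
    ring
  have hI : iteratedDeriv 2 (fun θ : ℝ => a * (1 / Real.cosh (w * θ)) ^ 2)
      = fun θ : ℝ => a*w^2*(4*(1/Real.cosh (w*θ))^2 - 6*((1/Real.cosh (w*θ))^2)^2) := by
    rw [iteratedDeriv_succ, iteratedDeriv_one, hD]
    exact funext fun θ => (hd2 θ).deriv
  rw [show (∫ θ : ℝ,
        (-(V / 2) * (fun θ : ℝ => a * (1 / Real.cosh (w * θ)) ^ 2) θ ^ 2
          + (fun θ : ℝ => a * (1 / Real.cosh (w * θ)) ^ 2) θ ^ 3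
          - 1 / 2 * (deriv (fun θ : ℝ => a * (1 / Real.cosh (w * θ)) ^ 2) θ) ^ 2
          + ε * (c1 / 12 * (fun θ : ℝ => a * (1 / Real.cosh (w * θ)) ^ 2) θ ^ 4
              + c3 / 2 * (fun θ : ℝ => a * (1 / Real.cosh (w * θ)) ^ 2) θ
                  * (deriv (fun θ : ℝ => a * (1 / Real.cosh (w * θ)) ^ 2) θ) ^ 2
              + c3 / 2 * (fun θ : ℝ => a * (1 / Real.cosh (w * θ)) ^ 2) θ ^ 2
                  * iteratedDeriv 2 (fun θ : ℝ => a * (1 / Real.cosh (w * θ)) ^ 2) θ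
              + c4 / 2 * (iteratedDeriv 2 (fun θ : ℝ => a * (1 / Real.cosh (w * θ)) ^ 2) θ) ^ 2)))
      = ∫ θ : ℝ, ((-(V / 2) * a ^ 2 - 2 * a ^ 2 * w ^ 2 + ε * (8 * c4 * a ^ 2 * w ^ 4))
            * ((1 / Real.cosh (w * θ)) ^ 2) ^ 2
          + (a ^ 3 + 2 * a ^ 2 * w ^ 2 + ε * (4 * c3 * a ^ 3 * w ^ 2 - 24 * c4 * a ^ 2 * w ^ 4))
            * ((1 / Real.cosh (w * θ)) ^ 2) ^ 3
          + (ε * (c1 * a ^ 4 / 12 - 5 * c3 * a ^ 3 * w ^ 2 + 18 * c4 * a ^ 2 * w ^ 4))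
            * ((1 / Real.cosh (w * θ)) ^ 2) ^ 4) from by
    congr 1
    funext θ
    rw [hD, hI]
    have hs2 : Real.sinh (w*θ)^2 = Real.cosh (w*θ)^2 - 1 := Real.sinh_sq _
    simp only [mul_pow, div_pow]
    rw [hs2]
    field_simp
    ring]
  rw [integral_sech_poly w _ _ _ hw]
  field_simp
  ring
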